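/- (Cordero-Erausquin–Maurey four function theorem) Let λ ∈ (0,1) and f₁, f₂, f₃, f₄ : ℝ^d → [0,∞) be integrable functions such that f₁(x)·f₂(y) ≤ f₃(λx + (1-λ)y)·f₄((1-λ)x + λy) for all x, y ∈ ℝ^d. Then (∫f₁)(∫f₂) ≤ (∫f₃)(∫f₄). -/

import Mathlib

open MeasureTheory Real Set Filter
open scoped ENNReal Topology

noncomputable section

namespace CEM

/-- A smooth strictly increasing bijection from `ℝ` to `(0,1)`. -/
def sig (r : ℝ) : ℝ := Real.arctan r / π + 1/2

/-- The derivative of `sig`. -/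
def sig' (r : ℝ) : ℝ := (π * (1 + r^2))⁻¹

lemma sig'_pos (r : ℝ) : 0 < sig' r := by
  have h := Real.pi_pos
  have : 0 < π * (1 + r^2) := by positivity
  exact inv_pos.2 this

lemma hasDerivAt_sig (r : ℝ) : HasDerivAt sig (sig' r) r := by
  have h : HasDerivAt (fun x => arctan x / π + 1 / 2) (1 / (1 + r ^ 2) / π) r :=
    ((Real.hasDerivAt_arctan r).div_const π).add_const (1/2 : ℝ)
  convert h using 1
  · rfl
  rw [sig', mul_inv, one_div, div_eq_mul_inv]
  ring

lemma sig_pos (r : ℝ) : 0 < sig r := by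
  have hπ := Real.pi_pos
  have h1 : -(π/2) / π < arctan r / π :=
    (div_lt_div_iff_of_pos_right hπ).2 (Real.neg_pi_div_two_lt_arctan r)
  have h2 : -(π/2) / π = -(1/2 : ℝ) := by field_simp
  rw [sig]; rw [h2] at h1; linarith

lemma sig_lt_one (r : ℝ) : sig r < 1 := by
  have hπ := Real.pi_pos
  have h1 : arctan r / π < (π/2) / π :=
    (div_lt_div_iff_of_pos_right hπ).2 (Real.arctan_lt_pi_div_two r)
  have h2 : (π/2) / π = (1/2 : ℝ) := by field_simp
  rw [sig]; rw [h2] at h1; linarith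

lemma sig_strictMono : StrictMono sig := by
  intro a b hab
  have hπ := Real.pi_pos
  have := Real.arctan_strictMono hab
  exact by simp only [sig]; gcongr

lemma tendsto_sig_atTop : Tendsto sig atTop (𝓝 1) := by
  have hπ := Real.pi_pos
  have h : Tendsto (fun r => arctan r / π + 1/2) atTop (𝓝 ((π/2)/π + 1/2)) :=
    ((Real.tendsto_arctan_atTop.mono_right nhdsWithin_le_nhds).div_const π).add_const _
  have : (π/2)/π + 1/2 = (1:ℝ) := by field_simp; ring
  rw [this] at h; exact h

lemma tendsto_sig_atBot : Tendsto sig atBot (𝓝 0) := by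
  have hπ := Real.pi_pos
  have h : Tendsto (fun r => arctan r / π + 1/2) atBot (𝓝 ((-(π/2))/π + 1/2)) :=
    ((Real.tendsto_arctan_atBot.mono_right nhdsWithin_le_nhds).div_const π).add_const _
  have : (-(π/2))/π + 1/2 = (0:ℝ) := by field_simp; ring
  rw [this] at h; exact h

lemma integrable_sig' : Integrable sig' := by
  have h : Integrable (fun x : ℝ => (1 + x^2)⁻¹) := integrable_inv_one_add_sq
  have := h.const_mul π⁻¹
  apply this.congr
  filter_upwards with x
  rw [sig', mul_inv]

lemma integral_sig' : ∫ r, sig' r = 1 := by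
  have hπ := Real.pi_pos
  have : ∫ r, sig' r = π⁻¹ * ∫ x : ℝ, (1 + x^2)⁻¹ := by
    rw [← integral_const_mul]
    congr 1 with x
    rw [sig', mul_inv]
  rw [this, integral_univ_inv_one_add_sq]
  field_simp

lemma lintegral_sig' : ∫⁻ r, ENNReal.ofReal (sig' r) = 1 := by
  rw [← ofReal_integral_eq_lintegral_ofReal integrable_sig'
    (Eventually.of_forall fun r => (sig'_pos r).le), integral_sig', ENNReal.ofReal_one]

/-- The reference probability measure on `ℝ` with density `sig'`. -/
def rho : Measure ℝ := volume.withDensity (fun r => ENNReal.ofReal (sig' r))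

lemma measurable_sig' : Measurable fun r => ENNReal.ofReal (sig' r) := by
  apply ENNReal.measurable_ofReal.comp
  have : Continuous sig' := by
    apply Continuous.inv₀ (by continuity)
    intro x
    have := Real.pi_pos
    positivity
  exact this.measurable

instance : IsProbabilityMeasure rho := by
  constructor
  rw [rho, withDensity_apply _ MeasurableSet.univ, Measure.restrict_univ, lintegral_sig']

lemma rho_null_iff {s : Set ℝ} (hs : MeasurableSet s) : rho s = 0 ↔ volume s = 0 := by
  rw [rho, withDensity_apply _ hs]
  constructor
  · intro h
    have h0 := (setLIntegral_eq_zero_iff hs measurable_sig').1 h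
    have hae : ∀ᵐ r, r ∉ s := by
      filter_upwards [h0] with r hr
      intro hrs
      have := hr hrs
      rw [ENNReal.ofReal_eq_zero] at this
      exact absurd this (not_le.2 (sig'_pos r))
    exact measure_eq_zero_iff_ae_notMem.mpr hae
  · intro h
    rw [setLIntegral_measure_zero _ _ h]

lemma rho_Iic (a : ℝ) : rho (Iic a) = ENNReal.ofReal (sig a) := by
  rw [rho, withDensity_apply _ measurableSet_Iic]
  rw [← ofReal_integral_eq_lintegral_ofReal (integrable_sig'.restrict)
    (Eventually.of_forall fun r => (sig'_pos r).le)]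
  congr 1
  have := MeasureTheory.integral_Iic_of_hasDerivAt_of_tendsto
    (f := sig) (f' := sig') (a := a) (m := 0)
    (hasDerivAt_sig a).continuousAt.continuousWithinAt
    (fun x _ => hasDerivAt_sig x) integrable_sig'.integrableOn tendsto_sig_atBot
  rw [this, sub_zero]

lemma quantile_exists (g : ℝ → ℝ≥0∞) (hg : Measurable g) (hg1 : ∫⁻ r, g r = 1) :
    ∃ X : ℝ → ℝ, StrictMono X ∧
      ∀ᵐ r, HasDerivAt X (deriv X r) r ∧ 0 < deriv X r ∧
        g (X r) * ENNReal.ofReal (deriv X r) = ENNReal.ofReal (sig' r) := by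
  set μ : Measure ℝ := volume.withDensity g with hμ
  have hμac : μ ≪ volume := withDensity_absolutelyContinuous _ _
  haveI : IsProbabilityMeasure μ := by
    constructor
    rw [hμ, withDensity_apply _ MeasurableSet.univ, Measure.restrict_univ, hg1]
  set F : StieltjesFunction ℝ := ProbabilityTheory.cdf μ with hF
  have hFmono : Monotone F := F.mono
  have hFtop : Tendsto F atTop (𝓝 1) := ProbabilityTheory.tendsto_cdf_atTop μ
  have hFbot : Tendsto F atBot (𝓝 0) := ProbabilityTheory.tendsto_cdf_atBot μ
  have hFIic : ∀ a, ENNReal.ofReal (F a) = μ (Iic a) := fun a => ProbabilityTheory.ofReal_cdf μ a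
  -- continuity of F
  have hFcont : Continuous F := by
    rw [continuous_iff_continuousAt]
    intro a
    have hsing : F.measure {a} = 0 := by
      rw [ProbabilityTheory.measure_cdf]
      exact hμac (volume_singleton)
    rw [StieltjesFunction.measure_singleton] at hsing
    have hll : Function.leftLim F a = F a := by
      rw [ENNReal.ofReal_eq_zero, sub_nonpos] at hsing
      exact le_antisymm (hFmono.leftLim_le le_rfl) hsing
    have hleft : ContinuousWithinAt F (Iio a) a :=
      hFmono.continuousWithinAt_Iio_iff_leftLim_eq.2 hll
    have hright : ContinuousWithinAt F (Ioi a) a :=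
      (F.right_continuous a).mono Ioi_subset_Ici_self
    exact continuousAt_iff_continuous_left'_right'.2 ⟨hleft, hright⟩
  -- the quantile map
  set S : ℝ → Set ℝ := fun r => {s | sig r ≤ F s} with hS
  have hne : ∀ r, (S r).Nonempty := by
    intro r
    obtain ⟨s, hs⟩ := (hFtop.eventually (eventually_gt_nhds (sig_lt_one r))).exists
    exact ⟨s, hs.le⟩
  have hbdd : ∀ r, BddBelow (S r) := by
    intro r
    obtain ⟨s₀, hs₀⟩ := (hFbot.eventually (eventually_lt_nhds (sig_pos r))).exists
    refine ⟨s₀, fun m hm => ?_⟩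
    by_contra hlt
    push_neg at hlt
    exact absurd ((hFmono hlt.le).trans_lt hs₀) (not_lt.2 hm)
  have hclosed : ∀ r, IsClosed (S r) := fun r => isClosed_Ici.preimage hFcont
  set X : ℝ → ℝ := fun r => sInf (S r) with hX
  have hmemX : ∀ r, X r ∈ S r := fun r => (hclosed r).csInf_mem (hne r) (hbdd r)
  have hFX : ∀ r, F (X r) = sig r := by
    intro r
    refine le_antisymm ?_ (hmemX r)
    have hlt : ∀ s < X r, F s < sig r := by
      intro s hs
      by_contra hle
      push_neg at hle
      exact absurd (csInf_le (hbdd r) hle) (not_le.2 hs)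
    have htend : Tendsto F (𝓝[<] (X r)) (𝓝 (F (X r))) :=
      (hFcont.continuousAt).continuousWithinAt.tendsto
    refine le_of_tendsto htend ?_
    filter_upwards [self_mem_nhdsWithin] with s hs
    exact (hlt s hs).le
  have hXmono : Monotone X := by
    intro a b hab
    exact csInf_le_csInf (hbdd a) (hne b) (fun s hs => (sig_strictMono.monotone hab).trans hs)
  have hXsm : StrictMono X := by
    apply hXmono.strictMono_of_injective
    intro a b hab
    apply sig_strictMono.injective
    rw [← hFX a, ← hFX b, hab]
  have hXmeas : Measurable X := hXmono.measurable
  -- pushforward identity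
  have hgalois : ∀ r s, X r ≤ s ↔ sig r ≤ F s := by
    intro r s
    constructor
    · intro hle
      rw [← hFX r]
      exact hFmono hle
    · intro hle
      exact csInf_le (hbdd r) hle
  have hmap : Measure.map X rho = μ := by
    haveI : IsProbabilityMeasure (Measure.map X rho) :=
      Measure.isProbabilityMeasure_map hXmeas.aemeasurable
    refine MeasureTheory.Measure.ext_of_Iic _ _ (fun a => ?_)
    rw [Measure.map_apply hXmeas measurableSet_Iic]
    have hpre : X ⁻¹' (Iic a) = {r | sig r ≤ F a} := by
      ext r
      simp only [mem_preimage, mem_Iic, mem_setOf_eq]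
      exact hgalois r a
    rw [hpre, ← hFIic a]
    rcases le_or_gt (F a) 0 with h0 | h0
    · have : {r | sig r ≤ F a} = ∅ := by
        ext r
        simp only [mem_setOf_eq, mem_empty_iff_false, iff_false, not_le]
        exact lt_of_le_of_lt h0 (sig_pos r)
      rw [this, measure_empty, ENNReal.ofReal_eq_zero.2 h0]
    · rcases le_or_gt 1 (F a) with h1 | h1
      · have hFa : F a = 1 := le_antisymm (ProbabilityTheory.cdf_le_one μ a) h1
        have : {r | sig r ≤ F a} = univ := by
          ext r
          simp only [mem_setOf_eq, mem_univ, iff_true, hFa]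
          exact (sig_lt_one r).le
        rw [this, hFa]
        simp [measure_univ]
      · -- 0 < F a < 1
        set b : ℝ := Real.tan (π * (F a - 1/2)) with hb
        have hπ := Real.pi_pos
        have hrange : -(π/2) < π * (F a - 1/2) ∧ π * (F a - 1/2) < π/2 := by
          constructor <;> nlinarith
        have hsigb : sig b = F a := by
          rw [sig, hb, Real.arctan_tan hrange.1 hrange.2]
          field_simp
          ring
        have : {r | sig r ≤ F a} = Iic b := by
          ext r
          simp only [mem_setOf_eq, mem_Iic, ← hsigb]
          exact ⟨fun h => (sig_strictMono.le_iff_le).1 h, fun h => sig_strictMono.monotone h⟩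
        rw [this, rho_Iic, hsigb]
  -- a.e. derivative identity
  have hFd : ∀ᵐ s, HasDerivAt F ((g s).toReal) s ∧ g s ≠ ∞ := by
    have h1 := F.ae_hasDerivAt
    have h2 : Measure.rnDeriv μ volume =ᵐ[volume] g :=
      Measure.rnDeriv_withDensity volume hg
    have h3 : ∀ᵐ s, g s < ∞ := ae_lt_top hg (by rw [hg1]; exact ENNReal.one_ne_top)
    have hFm : F.measure = μ := ProbabilityTheory.measure_cdf μ
    filter_upwards [h1, h2, h3] with s hs1 hs2 hs3
    rw [hFm] at hs1
    rw [hs2] at hs1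
    exact ⟨hs1, hs3.ne⟩
  set N : Set ℝ := toMeasurable volume {s | ¬ (HasDerivAt F ((g s).toReal) s ∧ g s ≠ ∞)} with hN
  have hNnull : volume N = 0 := by
    rw [hN, measure_toMeasurable]
    exact hFd
  have hNmeas : MeasurableSet N := measurableSet_toMeasurable _ _
  have hXNnull : volume (X ⁻¹' N) = 0 := by
    rw [← rho_null_iff (hXmeas hNmeas)]
    have : rho (X ⁻¹' N) = (Measure.map X rho) N := (Measure.map_apply hXmeas hNmeas).symm
    rw [this, hmap]
    exact hμac hNnull
  have hXN : ∀ᵐ r, X r ∉ N := measure_eq_zero_iff_ae_notMem.mp hXNnull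
  refine ⟨X, hXsm, ?_⟩
  filter_upwards [hXmono.ae_differentiableAt, hXN] with r hdiff hnotN
  have hXd : HasDerivAt X (deriv X r) r := hdiff.hasDerivAt
  have hprop : HasDerivAt F ((g (X r)).toReal) (X r) ∧ g (X r) ≠ ∞ := by
    by_contra hcon
    exact hnotN (subset_toMeasurable _ _ hcon)
  have hcomp : HasDerivAt (F ∘ X) ((g (X r)).toReal * deriv X r) r :=
    hprop.1.comp r hXd
  have hFXfun : F ∘ X = sig := funext hFX
  rw [hFXfun] at hcomp
  have hkey : (g (X r)).toReal * deriv X r = sig' r := hcomp.unique (hasDerivAt_sig r)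
  have hpos : 0 < deriv X r := by
    by_contra hle
    push_neg at hle
    have h1 := sig'_pos r
    nlinarith [ENNReal.toReal_nonneg (a := g (X r))]
  refine ⟨hXd, hpos, ?_⟩
  rw [← ENNReal.ofReal_toReal hprop.2, ← ENNReal.ofReal_mul ENNReal.toReal_nonneg, hkey]

/-- Change of variables inequality for an injective differentiable map on a set. -/
lemma lintegral_comp_mul_deriv_le {w Dw : ℝ → ℝ} {s : Set ℝ} (hs : MeasurableSet s)
    (hw : ∀ r ∈ s, HasDerivAt w (Dw r) r) (hinj : InjOn w s) (g : ℝ → ℝ≥0∞) :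
    ∫⁻ r in s, ENNReal.ofReal |Dw r| * g (w r) ≤ ∫⁻ z, g z := by
  have key : ∫⁻ x in w '' s, g x = ∫⁻ x in s, ENNReal.ofReal |Dw x| * g (w x) := by
    simpa only [ContinuousLinearMap.det_toSpanSingleton] using
      lintegral_image_eq_lintegral_abs_det_fderiv_mul volume hs
        (fun x hx => ((hw x hx).hasDerivWithinAt).hasFDerivWithinAt) hinj g
  rw [← key]
  exact lintegral_mono' Measure.restrict_le_self le_rfl

lemma rpow_half_sq (z : ℝ≥0∞) : (z ^ ((2:ℝ)⁻¹)) ^ (2:ℝ) = z := by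
  rw [← ENNReal.rpow_mul, show ((2:ℝ)⁻¹ * 2) = 1 by norm_num, ENNReal.rpow_one]

lemma sq_rpow_half (z : ℝ≥0∞) : (z * z) ^ ((2:ℝ)⁻¹) = z := by
  have h : z * z = z ^ (2:ℝ) := by
    rw [show (2:ℝ) = ((2:ℕ):ℝ) by norm_num, ENNReal.rpow_natCast, pow_two]
  rw [h, ← ENNReal.rpow_mul, show ((2:ℝ) * 2⁻¹) = 1 by norm_num, ENNReal.rpow_one]

/-- The one-dimensional normalized case of the four-function theorem. -/
lemma dim1_normalized (lam : ℝ) (hlam : lam ∈ Set.Ioo (0:ℝ) 1)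
    (g₁ g₂ g₃ g₄ : ℝ → ℝ≥0∞) (hm₁ : Measurable g₁) (hm₂ : Measurable g₂)
    (hm₃ : Measurable g₃) (hm₄ : Measurable g₄)
    (hg₁ : ∫⁻ x, g₁ x = 1) (hg₂ : ∫⁻ y, g₂ y = 1)
    (h : ∀ x y, g₁ x * g₂ y ≤ g₃ (lam * x + (1 - lam) * y) * g₄ ((1 - lam) * x + lam * y)) :
    1 ≤ (∫⁻ x, g₃ x) * (∫⁻ y, g₄ y) := by
  obtain ⟨hl0, hl1⟩ := hlam
  obtain ⟨X, hXsm, hXae⟩ := quantile_exists g₁ hm₁ hg₁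
  obtain ⟨Y, hYsm, hYae⟩ := quantile_exists g₂ hm₂ hg₂
  set P : ℝ → Prop := fun r =>
    (HasDerivAt X (deriv X r) r ∧ 0 < deriv X r ∧
      g₁ (X r) * ENNReal.ofReal (deriv X r) = ENNReal.ofReal (sig' r)) ∧
    (HasDerivAt Y (deriv Y r) r ∧ 0 < deriv Y r ∧
      g₂ (Y r) * ENNReal.ofReal (deriv Y r) = ENNReal.ofReal (sig' r)) with hP
  have hPae : ∀ᵐ r, P r := hXae.and hYae
  set s : Set ℝ := (toMeasurable volume {r | ¬ P r})ᶜ with hs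
  have hsmeas : MeasurableSet s := (measurableSet_toMeasurable _ _).compl
  have hsnull : volume sᶜ = 0 := by
    rw [hs, compl_compl, measure_toMeasurable]
    exact hPae
  have hsP : ∀ r ∈ s, P r := by
    intro r hr
    by_contra hcon
    exact hr (subset_toMeasurable _ _ hcon)
  -- the two combined transport maps
  set U : ℝ → ℝ := fun r => lam * X r + (1 - lam) * Y r with hU
  set V : ℝ → ℝ := fun r => (1 - lam) * X r + lam * Y r with hV
  set DU : ℝ → ℝ := fun r => lam * deriv X r + (1 - lam) * deriv Y r with hDU
  set DV : ℝ → ℝ := fun r => (1 - lam) * deriv X r + lam * deriv Y r with hDV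
  have hUsm : StrictMono U := by
    intro a b hab
    have h1 := hXsm hab
    have h2 := hYsm hab
    simp only [hU]
    nlinarith
  have hVsm : StrictMono V := by
    intro a b hab
    have h1 := hXsm hab
    have h2 := hYsm hab
    simp only [hV]
    nlinarith
  have hUd : ∀ r ∈ s, HasDerivAt U (DU r) r := by
    intro r hr
    exact ((hsP r hr).1.1.const_mul lam).add ((hsP r hr).2.1.const_mul (1 - lam))
  have hVd : ∀ r ∈ s, HasDerivAt V (DV r) r := by
    intro r hr
    exact ((hsP r hr).1.1.const_mul (1 - lam)).add ((hsP r hr).2.1.const_mul lam)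
  -- integrands
  set al : ℝ → ℝ≥0∞ := fun r => ENNReal.ofReal |DU r| * g₃ (U r) with hal
  set be : ℝ → ℝ≥0∞ := fun r => ENNReal.ofReal |DV r| * g₄ (V r) with hbe
  have hXmeas : Measurable X := hXsm.monotone.measurable
  have hYmeas : Measurable Y := hYsm.monotone.measurable
  have hDXmeas : Measurable (deriv X) := measurable_deriv X
  have hDYmeas : Measurable (deriv Y) := measurable_deriv Y
  have halmeas : Measurable al := by
    apply Measurable.mul
    · exact ENNReal.measurable_ofReal.comp
        (((hDXmeas.const_mul lam).add (hDYmeas.const_mul (1-lam))).abs)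
    · exact hm₃.comp ((hXmeas.const_mul lam).add (hYmeas.const_mul (1-lam)))
  have hbemeas : Measurable be := by
    apply Measurable.mul
    · exact ENNReal.measurable_ofReal.comp
        (((hDXmeas.const_mul (1-lam)).add (hDYmeas.const_mul lam)).abs)
    · exact hm₄.comp ((hXmeas.const_mul (1-lam)).add (hYmeas.const_mul lam))
  -- pointwise inequality on s
  have hpoint : ∀ r ∈ s, ENNReal.ofReal (sig' r) ≤ (al r * be r) ^ ((2:ℝ)⁻¹) := by
    intro r hr
    obtain ⟨⟨hXd, hXpos, hXid⟩, ⟨hYd, hYpos, hYid⟩⟩ := hsP r hr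
    have hDUpos : 0 < DU r := by simp only [hDU]; nlinarith
    have hDVpos : 0 < DV r := by simp only [hDV]; nlinarith
    have hamgm : deriv X r * deriv Y r ≤ DU r * DV r := by
      simp only [hDU, hDV]
      nlinarith [mul_nonneg (mul_nonneg hl0.le (sub_pos.2 hl1).le)
        (sq_nonneg (deriv X r - deriv Y r))]
    have hsq : ENNReal.ofReal (sig' r) * ENNReal.ofReal (sig' r) ≤ al r * be r := by
      have e1 : ENNReal.ofReal (sig' r) * ENNReal.ofReal (sig' r)
          = g₁ (X r) * ENNReal.ofReal (deriv X r) * (g₂ (Y r) * ENNReal.ofReal (deriv Y r)) := by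
        rw [hXid, hYid]
      rw [e1]
      simp only [hal, hbe]
      calc g₁ (X r) * ENNReal.ofReal (deriv X r) * (g₂ (Y r) * ENNReal.ofReal (deriv Y r))
          = (ENNReal.ofReal (deriv X r) * ENNReal.ofReal (deriv Y r)) * (g₁ (X r) * g₂ (Y r)) := by
            ring
        _ ≤ (ENNReal.ofReal |DU r| * ENNReal.ofReal |DV r|) * (g₃ (U r) * g₄ (V r)) := by
            apply mul_le_mul'
            · rw [← ENNReal.ofReal_mul hXpos.le, ← ENNReal.ofReal_mul (abs_nonneg _),
                abs_of_pos hDUpos, abs_of_pos hDVpos]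
              exact ENNReal.ofReal_le_ofReal hamgm
            · exact h (X r) (Y r)
        _ = ENNReal.ofReal |DU r| * g₃ (U r) * (ENNReal.ofReal |DV r| * g₄ (V r)) := by
            ring
    calc ENNReal.ofReal (sig' r)
        = (ENNReal.ofReal (sig' r) * ENNReal.ofReal (sig' r)) ^ ((2:ℝ)⁻¹) :=
          (sq_rpow_half _).symm
      _ ≤ (al r * be r) ^ ((2:ℝ)⁻¹) := ENNReal.rpow_le_rpow hsq (by norm_num)
  -- integrate
  have hrestrict : volume.restrict s = volume := by
    rw [Measure.restrict_congr_set (ae_eq_univ.2 hsnull), Measure.restrict_univ]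
  have hone : (1:ℝ≥0∞) = ∫⁻ r in s, ENNReal.ofReal (sig' r) := by
    rw [hrestrict, lintegral_sig']
  have hCS : ∫⁻ r in s, (al r * be r) ^ ((2:ℝ)⁻¹)
      ≤ (∫⁻ r in s, al r) ^ ((2:ℝ)⁻¹) * (∫⁻ r in s, be r) ^ ((2:ℝ)⁻¹) := by
    have hconj : (2:ℝ).HolderConjugate 2 := Real.HolderConjugate.two_two
    have := ENNReal.lintegral_mul_le_Lp_mul_Lq (volume.restrict s) hconj
      (f := fun r => al r ^ ((2:ℝ)⁻¹)) (g := fun r => be r ^ ((2:ℝ)⁻¹))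
      ((halmeas.pow_const _).aemeasurable) ((hbemeas.pow_const _).aemeasurable)
    simp only [Pi.mul_apply, rpow_half_sq] at this
    calc ∫⁻ r in s, (al r * be r) ^ ((2:ℝ)⁻¹)
        = ∫⁻ r in s, al r ^ ((2:ℝ)⁻¹) * be r ^ ((2:ℝ)⁻¹) := by
          congr 1 with r
          rw [ENNReal.mul_rpow_of_nonneg _ _ (by norm_num)]
      _ ≤ (∫⁻ r in s, al r) ^ (1/(2:ℝ)) * (∫⁻ r in s, be r) ^ (1/(2:ℝ)) := this
      _ = (∫⁻ r in s, al r) ^ ((2:ℝ)⁻¹) * (∫⁻ r in s, be r) ^ ((2:ℝ)⁻¹) := by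
          rw [one_div]
  have hA : ∫⁻ r in s, al r ≤ ∫⁻ z, g₃ z :=
    lintegral_comp_mul_deriv_le hsmeas hUd (hUsm.injective.injOn) g₃
  have hB : ∫⁻ r in s, be r ≤ ∫⁻ z, g₄ z :=
    lintegral_comp_mul_deriv_le hsmeas hVd (hVsm.injective.injOn) g₄
  have hfinal : (1:ℝ≥0∞) ≤ ((∫⁻ z, g₃ z) * (∫⁻ z, g₄ z)) ^ ((2:ℝ)⁻¹) := by
    calc (1:ℝ≥0∞) = ∫⁻ r in s, ENNReal.ofReal (sig' r) := hone
      _ ≤ ∫⁻ r in s, (al r * be r) ^ ((2:ℝ)⁻¹) := by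
          apply lintegral_mono_ae
          filter_upwards [ae_restrict_mem hsmeas] with r hr
          exact hpoint r hr
      _ ≤ (∫⁻ r in s, al r) ^ ((2:ℝ)⁻¹) * (∫⁻ r in s, be r) ^ ((2:ℝ)⁻¹) := hCS
      _ ≤ (∫⁻ z, g₃ z) ^ ((2:ℝ)⁻¹) * (∫⁻ z, g₄ z) ^ ((2:ℝ)⁻¹) := by
          gcongr <;> norm_num
      _ = ((∫⁻ z, g₃ z) * (∫⁻ z, g₄ z)) ^ ((2:ℝ)⁻¹) := by
          rw [ENNReal.mul_rpow_of_nonneg _ _ (by norm_num)]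
  have := ENNReal.rpow_le_rpow hfinal (by norm_num : (0:ℝ) ≤ 2)
  rwa [ENNReal.one_rpow, rpow_half_sq] at this

/-- One-dimensional case with finite nonzero integrals. -/
lemma dim1_finite (lam : ℝ) (hlam : lam ∈ Set.Ioo (0:ℝ) 1)
    (g₁ g₂ g₃ g₄ : ℝ → ℝ≥0∞) (hm₁ : Measurable g₁) (hm₂ : Measurable g₂)
    (hm₃ : Measurable g₃) (hm₄ : Measurable g₄)
    (h10 : ∫⁻ x, g₁ x ≠ 0) (h1t : ∫⁻ x, g₁ x ≠ ⊤)
    (h20 : ∫⁻ y, g₂ y ≠ 0) (h2t : ∫⁻ y, g₂ y ≠ ⊤)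
    (h : ∀ x y, g₁ x * g₂ y ≤ g₃ (lam * x + (1 - lam) * y) * g₄ ((1 - lam) * x + lam * y)) :
    (∫⁻ x, g₁ x) * (∫⁻ y, g₂ y) ≤ (∫⁻ x, g₃ x) * (∫⁻ y, g₄ y) := by
  set c₁ := ∫⁻ x, g₁ x with hc₁
  set c₂ := ∫⁻ y, g₂ y with hc₂
  have hnorm : (1:ℝ≥0∞) ≤ (∫⁻ x, g₃ x * c₁⁻¹) * (∫⁻ y, g₄ y * c₂⁻¹) := by
    apply dim1_normalized lam hlam (fun x => g₁ x * c₁⁻¹) (fun y => g₂ y * c₂⁻¹)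
      (fun z => g₃ z * c₁⁻¹) (fun z => g₄ z * c₂⁻¹)
      (hm₁.mul_const _) (hm₂.mul_const _) (hm₃.mul_const _) (hm₄.mul_const _)
    · rw [lintegral_mul_const _ hm₁, ← hc₁, ENNReal.mul_inv_cancel h10 h1t]
    · rw [lintegral_mul_const _ hm₂, ← hc₂, ENNReal.mul_inv_cancel h20 h2t]
    · intro x y
      calc g₁ x * c₁⁻¹ * (g₂ y * c₂⁻¹) = g₁ x * g₂ y * (c₁⁻¹ * c₂⁻¹) := by ring
        _ ≤ g₃ (lam * x + (1 - lam) * y) * g₄ ((1 - lam) * x + lam * y) * (c₁⁻¹ * c₂⁻¹) :=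
            mul_le_mul_left (h x y) _
        _ = g₃ (lam * x + (1 - lam) * y) * c₁⁻¹ * (g₄ ((1 - lam) * x + lam * y) * c₂⁻¹) := by ring
  rw [lintegral_mul_const _ hm₃, lintegral_mul_const _ hm₄] at hnorm
  have := mul_le_mul_left hnorm (c₁ * c₂)
  rw [one_mul] at this
  calc c₁ * c₂ ≤ (∫⁻ x, g₃ x) * c₁⁻¹ * ((∫⁻ y, g₄ y) * c₂⁻¹) * (c₁ * c₂) := this
    _ = (∫⁻ x, g₃ x) * (∫⁻ y, g₄ y) * ((c₁⁻¹ * c₁) * (c₂⁻¹ * c₂)) := by ring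
    _ = (∫⁻ x, g₃ x) * (∫⁻ y, g₄ y) := by
        rw [ENNReal.inv_mul_cancel h10 h1t, ENNReal.inv_mul_cancel h20 h2t, one_mul, mul_one]

/-- Truncation of an `ℝ≥0∞`-valued function. -/
def trunc (g : ℝ → ℝ≥0∞) (n : ℕ) : ℝ → ℝ≥0∞ :=
  (Set.Icc (-(n:ℝ)) n).indicator (fun x => min (g x) n)

lemma trunc_le (g : ℝ → ℝ≥0∞) (n : ℕ) (x : ℝ) : trunc g n x ≤ g x := by
  rw [trunc]
  by_cases hx : x ∈ Set.Icc (-(n:ℝ)) n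
  · rw [indicator_of_mem hx]; exact min_le_left _ _
  · rw [indicator_of_notMem hx]; exact zero_le'

lemma trunc_measurable (g : ℝ → ℝ≥0∞) (hg : Measurable g) (n : ℕ) :
    Measurable (trunc g n) :=
  (hg.min measurable_const).indicator measurableSet_Icc

lemma trunc_mono (g : ℝ → ℝ≥0∞) : Monotone (trunc g) := by
  intro n m hnm x
  rw [trunc, trunc]
  by_cases hx : x ∈ Set.Icc (-(n:ℝ)) n
  · have hx' : x ∈ Set.Icc (-(m:ℝ)) m := by
      obtain ⟨h1, h2⟩ := hx
      have : (n:ℝ) ≤ m := Nat.cast_le.2 hnm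
      exact ⟨by linarith, by linarith⟩
    rw [indicator_of_mem hx, indicator_of_mem hx']
    exact min_le_min le_rfl (Nat.cast_le.2 hnm)
  · rw [indicator_of_notMem hx]
    exact zero_le'

lemma trunc_iSup (g : ℝ → ℝ≥0∞) (x : ℝ) : ⨆ n, trunc g n x = g x := by
  apply le_antisymm
  · exact iSup_le fun n => trunc_le g n x
  · obtain ⟨n₀, hn₀⟩ := exists_nat_ge |x|
    have hx : ∀ n : ℕ, x ∈ Set.Icc (-((n + n₀ : ℕ):ℝ)) ((n + n₀ : ℕ):ℝ) := by
      intro n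
      have : (n₀:ℝ) ≤ ((n + n₀ : ℕ):ℝ) := Nat.cast_le.2 (Nat.le_add_left _ _)
      rw [abs_le] at hn₀
      exact ⟨by linarith [hn₀.1], by linarith [hn₀.2]⟩
    calc g x = g x ⊓ ⊤ := by rw [inf_top_eq]
      _ = g x ⊓ ⨆ n : ℕ, (n:ℝ≥0∞) := by rw [ENNReal.iSup_natCast]
      _ = ⨆ n : ℕ, g x ⊓ (n:ℝ≥0∞) := by rw [inf_iSup_eq]
      _ ≤ ⨆ n, trunc g n x := by
          apply iSup_le
          intro n
          apply le_iSup_of_le (n + n₀)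
          rw [trunc, indicator_of_mem (hx n)]
          exact min_le_min le_rfl (by exact_mod_cast Nat.cast_le.2 (Nat.le_add_right _ _))

lemma trunc_lintegral_ne_top (g : ℝ → ℝ≥0∞) (n : ℕ) : ∫⁻ x, trunc g n x ≠ ⊤ := by
  have hle : ∀ x, trunc g n x ≤ (Set.Icc (-(n:ℝ)) n).indicator (fun _ => (n:ℝ≥0∞)) x := by
    intro x
    rw [trunc]
    by_cases hx : x ∈ Set.Icc (-(n:ℝ)) n
    · rw [indicator_of_mem hx, indicator_of_mem hx]; exact min_le_right _ _
    · rw [indicator_of_notMem hx, indicator_of_notMem hx]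
  have h2 : ∫⁻ x, trunc g n x ≤ n * volume (Set.Icc (-(n:ℝ)) n) := by
    calc ∫⁻ x, trunc g n x ≤ ∫⁻ x, (Set.Icc (-(n:ℝ)) n).indicator (fun _ => (n:ℝ≥0∞)) x :=
          lintegral_mono hle
      _ = n * volume (Set.Icc (-(n:ℝ)) n) := by
          rw [lintegral_indicator_const measurableSet_Icc]
  refine (h2.trans_lt ?_).ne
  rw [Real.volume_Icc]
  exact ENNReal.mul_lt_top (ENNReal.natCast_lt_top n) ENNReal.ofReal_lt_top

lemma trunc_lintegral_sup (g : ℝ → ℝ≥0∞) (hg : Measurable g) :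
    ⨆ n, ∫⁻ x, trunc g n x = ∫⁻ x, g x := by
  rw [← lintegral_iSup (trunc_measurable g hg) (trunc_mono g)]
  congr 1 with x
  exact trunc_iSup g x

/-- The one-dimensional case of the four-function theorem, `ℝ≥0∞` version. -/
lemma dim1 (lam : ℝ) (hlam : lam ∈ Set.Ioo (0:ℝ) 1)
    (g₁ g₂ g₃ g₄ : ℝ → ℝ≥0∞) (hm₁ : Measurable g₁) (hm₂ : Measurable g₂)
    (hm₃ : Measurable g₃) (hm₄ : Measurable g₄)
    (h : ∀ x y, g₁ x * g₂ y ≤ g₃ (lam * x + (1 - lam) * y) * g₄ ((1 - lam) * x + lam * y)) :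
    (∫⁻ x, g₁ x) * (∫⁻ y, g₂ y) ≤ (∫⁻ x, g₃ x) * (∫⁻ y, g₄ y) := by
  have main : ∀ n m : ℕ,
      (∫⁻ x, trunc g₁ n x) * (∫⁻ y, trunc g₂ m y) ≤ (∫⁻ x, g₃ x) * (∫⁻ y, g₄ y) := by
    intro n m
    rcases eq_or_ne (∫⁻ x, trunc g₁ n x) 0 with h0 | h0
    · rw [h0, zero_mul]; exact zero_le'
    rcases eq_or_ne (∫⁻ y, trunc g₂ m y) 0 with h0' | h0'
    · rw [h0', mul_zero]; exact zero_le'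
    apply dim1_finite lam hlam _ _ _ _ (trunc_measurable g₁ hm₁ n) (trunc_measurable g₂ hm₂ m)
      hm₃ hm₄ h0 (trunc_lintegral_ne_top g₁ n) h0' (trunc_lintegral_ne_top g₂ m)
    intro x y
    calc trunc g₁ n x * trunc g₂ m y ≤ g₁ x * g₂ y :=
          mul_le_mul' (trunc_le g₁ n x) (trunc_le g₂ m y)
      _ ≤ g₃ (lam * x + (1 - lam) * y) * g₄ ((1 - lam) * x + lam * y) := h x y
  rw [← trunc_lintegral_sup g₁ hm₁, ← trunc_lintegral_sup g₂ hm₂, ENNReal.iSup_mul]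
  apply iSup_le
  intro n
  rw [ENNReal.mul_iSup]
  exact iSup_le fun m => main n m

/-- The `ℝ≥0∞`-valued four-function theorem in all dimensions, by induction. -/
lemma core : ∀ (d : ℕ) (lam : ℝ), lam ∈ Set.Ioo (0:ℝ) 1 →
    ∀ g₁ g₂ g₃ g₄ : (Fin d → ℝ) → ℝ≥0∞, Measurable g₁ → Measurable g₂ →
    Measurable g₃ → Measurable g₄ →
    (∀ x y, g₁ x * g₂ y ≤ g₃ (lam • x + (1 - lam) • y) * g₄ ((1 - lam) • x + lam • y)) →
    (∫⁻ x, g₁ x) * (∫⁻ y, g₂ y) ≤ (∫⁻ x, g₃ x) * (∫⁻ y, g₄ y) := by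
  intro d
  induction d with
  | zero =>
    intro lam hlam g₁ g₂ g₃ g₄ hm₁ hm₂ hm₃ hm₄ h
    have hval : ∀ g : (Fin 0 → ℝ) → ℝ≥0∞, ∫⁻ x, g x = g default := by
      intro g
      have hg : g = fun _ => g default := funext fun x => by
        congr 1
        exact Subsingleton.elim _ _
      rw [hg, lintegral_const]
      have huniv : (volume : Measure (Fin 0 → ℝ)) Set.univ = 1 := by
        rw [show (volume : Measure (Fin 0 → ℝ)) = Measure.pi (fun _ => volume) from rfl,
          Measure.pi_univ]
        simp
      rw [huniv, mul_one]
    rw [hval g₁, hval g₂, hval g₃, hval g₄]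
    have := h default default
    rwa [Subsingleton.elim (lam • (default : Fin 0 → ℝ) + (1 - lam) • default) default,
      Subsingleton.elim ((1 - lam) • (default : Fin 0 → ℝ) + lam • default) default] at this
  | succ n ih =>
    intro lam hlam g₁ g₂ g₃ g₄ hm₁ hm₂ hm₃ hm₄ h
    set e := MeasurableEquiv.piFinSuccAbove (fun _ : Fin (n+1) => ℝ) 0 with he
    have hvp : MeasurePreserving e :=
      volume_preserving_piFinSuccAbove (fun _ : Fin (n+1) => ℝ) 0
    -- linearity of e
    have helin : ∀ (a b : ℝ) (u v : Fin (n+1) → ℝ), e (a • u + b • v) = a • e u + b • e v := by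
      intro a b u v
      apply Prod.ext
      · simp only [he, MeasurableEquiv.piFinSuccAbove_apply, Fin.insertNthEquiv_zero,
          Fin.consEquiv_symm_apply, Pi.add_apply, Pi.smul_apply, smul_eq_mul, Prod.smul_mk,
          Prod.mk_add_mk]
      · funext j
        simp only [he, MeasurableEquiv.piFinSuccAbove_apply, Fin.insertNthEquiv_zero,
          Fin.consEquiv_symm_apply, Fin.tail, Pi.add_apply, Pi.smul_apply, smul_eq_mul,
          Prod.smul_mk, Prod.mk_add_mk]
    have hsymm : ∀ (a b : ℝ) (p q : ℝ × (Fin n → ℝ)),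
        e.symm (a • p + b • q) = a • e.symm p + b • e.symm q := by
      intro a b p q
      apply e.injective
      rw [helin, e.apply_symm_apply, e.apply_symm_apply, e.apply_symm_apply]
    set G₁ : ℝ × (Fin n → ℝ) → ℝ≥0∞ := fun p => g₁ (e.symm p) with hG₁
    set G₂ : ℝ × (Fin n → ℝ) → ℝ≥0∞ := fun p => g₂ (e.symm p) with hG₂
    set G₃ : ℝ × (Fin n → ℝ) → ℝ≥0∞ := fun p => g₃ (e.symm p) with hG₃
    set G₄ : ℝ × (Fin n → ℝ) → ℝ≥0∞ := fun p => g₄ (e.symm p) with hG₄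
    have hGm₁ : Measurable G₁ := hm₁.comp e.symm.measurable
    have hGm₂ : Measurable G₂ := hm₂.comp e.symm.measurable
    have hGm₃ : Measurable G₃ := hm₃.comp e.symm.measurable
    have hGm₄ : Measurable G₄ := hm₄.comp e.symm.measurable
    -- slice integrals
    set S₁ : ℝ → ℝ≥0∞ := fun a => ∫⁻ x', G₁ (a, x') with hS₁
    set S₂ : ℝ → ℝ≥0∞ := fun a => ∫⁻ x', G₂ (a, x') with hS₂
    set S₃ : ℝ → ℝ≥0∞ := fun a => ∫⁻ x', G₃ (a, x') with hS₃
    set S₄ : ℝ → ℝ≥0∞ := fun a => ∫⁻ x', G₄ (a, x') with hS₄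
    have hSm₁ : Measurable S₁ := hGm₁.lintegral_prod_right'
    have hSm₂ : Measurable S₂ := hGm₂.lintegral_prod_right'
    have hSm₃ : Measurable S₃ := hGm₃.lintegral_prod_right'
    have hSm₄ : Measurable S₄ := hGm₄.lintegral_prod_right'
    -- slice-wise hypothesis via the induction hypothesis in dimension n
    have hslice : ∀ a b : ℝ,
        S₁ a * S₂ b ≤ S₃ (lam * a + (1 - lam) * b) * S₄ ((1 - lam) * a + lam * b) := by
      intro a b
      apply ih lam hlam (fun x' => G₁ (a, x')) (fun y' => G₂ (b, y'))
        (fun z' => G₃ (lam * a + (1 - lam) * b, z')) (fun z' => G₄ ((1 - lam) * a + lam * b, z'))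
        (hGm₁.comp measurable_prodMk_left) (hGm₂.comp measurable_prodMk_left)
        (hGm₃.comp measurable_prodMk_left) (hGm₄.comp measurable_prodMk_left)
      intro x' y'
      have hpt := h (e.symm (a, x')) (e.symm (b, y'))
      have earg3 : lam • ((a, x') : ℝ × (Fin n → ℝ)) + (1 - lam) • ((b, y') : ℝ × (Fin n → ℝ))
          = (lam * a + (1 - lam) * b, lam • x' + (1 - lam) • y') := by
        simp only [Prod.smul_mk, smul_eq_mul, Prod.mk_add_mk]
      have earg4 : (1 - lam) • ((a, x') : ℝ × (Fin n → ℝ)) + lam • ((b, y') : ℝ × (Fin n → ℝ))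
          = ((1 - lam) * a + lam * b, (1 - lam) • x' + lam • y') := by
        simp only [Prod.smul_mk, smul_eq_mul, Prod.mk_add_mk]
      have e3 : lam • e.symm (a, x') + (1 - lam) • e.symm (b, y')
          = e.symm (lam * a + (1 - lam) * b, lam • x' + (1 - lam) • y') := by
        rw [← earg3, hsymm]
      have e4 : (1 - lam) • e.symm (a, x') + lam • e.symm (b, y')
          = e.symm ((1 - lam) * a + lam * b, (1 - lam) • x' + lam • y') := by
        rw [← earg4, hsymm]
      rw [e3, e4] at hpt
      exact hpt
    -- apply the 1-D result to the slice integrals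
    have h1d := dim1 lam hlam S₁ S₂ S₃ S₄ hSm₁ hSm₂ hSm₃ hSm₄ hslice
    -- identify integrals
    have hint : ∀ (g : (Fin (n+1) → ℝ) → ℝ≥0∞) (hg : Measurable g),
        ∫⁻ a, ∫⁻ x', g (e.symm (a, x')) = ∫⁻ x, g x := by
      intro g hg
      have h1 : ∫⁻ p, g (e.symm p) ∂((volume : Measure ℝ).prod (volume : Measure (Fin n → ℝ)))
          = ∫⁻ a, ∫⁻ x', g (e.symm (a, x')) :=
        lintegral_prod _ ((hg.comp e.symm.measurable).aemeasurable)
      have h2 : ∫⁻ x, g (e.symm (e x)) ∂volume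
          = ∫⁻ p, g (e.symm p) ∂((volume : Measure ℝ).prod (volume : Measure (Fin n → ℝ))) :=
        hvp.lintegral_comp (hg.comp e.symm.measurable)
      simp only [MeasurableEquiv.symm_apply_apply] at h2
      rw [← h1, ← h2]
    rw [← hint g₁ hm₁, ← hint g₂ hm₂, ← hint g₃ hm₃, ← hint g₄ hm₄]
    exact h1d

/-- A measurable minorant that agrees almost everywhere. -/
lemma exists_le_version {α : Type*} [MeasurableSpace α] {μ : Measure α} (φ : α → ℝ≥0∞)
    (hφ : AEMeasurable φ μ) :
    ∃ G : α → ℝ≥0∞, Measurable G ∧ (∀ x, G x ≤ φ x) ∧ G =ᵐ[μ] φ := by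
  classical
  set N := toMeasurable μ {x | φ x ≠ hφ.mk φ x} with hN
  have hnull : μ N = 0 := by
    rw [hN, measure_toMeasurable]
    exact hφ.ae_eq_mk
  refine ⟨N.piecewise (fun _ => 0) (hφ.mk φ),
    Measurable.piecewise (measurableSet_toMeasurable _ _) measurable_const hφ.measurable_mk,
    ?_, ?_⟩
  · intro x
    by_cases hx : x ∈ N
    · rw [Set.piecewise_eq_of_mem _ _ _ hx]; exact zero_le'
    · rw [Set.piecewise_eq_of_notMem _ _ _ hx]
      have : ¬ φ x ≠ hφ.mk φ x := fun hc => hx (subset_toMeasurable _ _ hc)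
      rw [not_not] at this
      rw [this]
  · have : ∀ᵐ x ∂μ, x ∉ N := measure_eq_zero_iff_ae_notMem.mp hnull
    filter_upwards [this] with x hx
    rw [Set.piecewise_eq_of_notMem _ _ _ hx]
    have : ¬ φ x ≠ hφ.mk φ x := fun hc => hx (subset_toMeasurable _ _ hc)
    rw [not_not] at this
    rw [this]

/-- A measurable majorant that agrees almost everywhere. -/
lemma exists_ge_version {α : Type*} [MeasurableSpace α] {μ : Measure α} (φ : α → ℝ≥0∞)
    (hφ : AEMeasurable φ μ) :
    ∃ G : α → ℝ≥0∞, Measurable G ∧ (∀ x, φ x ≤ G x) ∧ G =ᵐ[μ] φ := by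
  classical
  set N := toMeasurable μ {x | φ x ≠ hφ.mk φ x} with hN
  have hnull : μ N = 0 := by
    rw [hN, measure_toMeasurable]
    exact hφ.ae_eq_mk
  refine ⟨N.piecewise (fun _ => ⊤) (hφ.mk φ),
    Measurable.piecewise (measurableSet_toMeasurable _ _) measurable_const hφ.measurable_mk,
    ?_, ?_⟩
  · intro x
    by_cases hx : x ∈ N
    · rw [Set.piecewise_eq_of_mem _ _ _ hx]; exact le_top
    · rw [Set.piecewise_eq_of_notMem _ _ _ hx]
      have : ¬ φ x ≠ hφ.mk φ x := fun hc => hx (subset_toMeasurable _ _ hc)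
      rw [not_not] at this
      rw [this]
  · have : ∀ᵐ x ∂μ, x ∉ N := measure_eq_zero_iff_ae_notMem.mp hnull
    filter_upwards [this] with x hx
    rw [Set.piecewise_eq_of_notMem _ _ _ hx]
    have : ¬ φ x ≠ hφ.mk φ x := fun hc => hx (subset_toMeasurable _ _ hc)
    rw [not_not] at this
    rw [this]

end CEM

end

open CEM in
theorem cordero_erausquin_maurey (d : ℕ) (lam : ℝ) (hlam : lam ∈ Set.Ioo (0:ℝ) 1)
    (f₁ f₂ f₃ f₄ : (Fin d → ℝ) → ℝ)
    (hnn₁ : ∀ x, 0 ≤ f₁ x) (hnn₂ : ∀ x, 0 ≤ f₂ x)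
    (hnn₃ : ∀ x, 0 ≤ f₃ x) (hnn₄ : ∀ x, 0 ≤ f₄ x)
    (hi₁ : Integrable f₁) (hi₂ : Integrable f₂) (hi₃ : Integrable f₃) (hi₄ : Integrable f₄)
    (h : ∀ x y, f₁ x * f₂ y ≤ f₃ (lam • x + (1 - lam) • y) * f₄ ((1 - lam) • x + lam • y)) :
    (∫ x, f₁ x) * (∫ y, f₂ y) ≤ (∫ x, f₃ x) * (∫ y, f₄ y) := by
  set φ₁ : (Fin d → ℝ) → ℝ≥0∞ := fun x => ENNReal.ofReal (f₁ x) with hφ₁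
  set φ₂ : (Fin d → ℝ) → ℝ≥0∞ := fun x => ENNReal.ofReal (f₂ x) with hφ₂
  set φ₃ : (Fin d → ℝ) → ℝ≥0∞ := fun x => ENNReal.ofReal (f₃ x) with hφ₃
  set φ₄ : (Fin d → ℝ) → ℝ≥0∞ := fun x => ENNReal.ofReal (f₄ x) with hφ₄
  have hφm₁ : AEMeasurable φ₁ volume := ENNReal.measurable_ofReal.comp_aemeasurable hi₁.aemeasurable
  have hφm₂ : AEMeasurable φ₂ volume := ENNReal.measurable_ofReal.comp_aemeasurable hi₂.aemeasurable
  have hφm₃ : AEMeasurable φ₃ volume := ENNReal.measurable_ofReal.comp_aemeasurable hi₃.aemeasurable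
  have hφm₄ : AEMeasurable φ₄ volume := ENNReal.measurable_ofReal.comp_aemeasurable hi₄.aemeasurable
  obtain ⟨G₁, hGm₁, hG₁le, hG₁ae⟩ := exists_le_version φ₁ hφm₁
  obtain ⟨G₂, hGm₂, hG₂le, hG₂ae⟩ := exists_le_version φ₂ hφm₂
  obtain ⟨G₃, hGm₃, hG₃ge, hG₃ae⟩ := exists_ge_version φ₃ hφm₃
  obtain ⟨G₄, hGm₄, hG₄ge, hG₄ae⟩ := exists_ge_version φ₄ hφm₄
  have hcore := core d lam hlam G₁ G₂ G₃ G₄ hGm₁ hGm₂ hGm₃ hGm₄ ?_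
  · have hl₁ : ∫⁻ x, G₁ x = ENNReal.ofReal (∫ x, f₁ x) := by
      rw [lintegral_congr_ae hG₁ae,
        ofReal_integral_eq_lintegral_ofReal hi₁ (Filter.Eventually.of_forall hnn₁)]
    have hl₂ : ∫⁻ x, G₂ x = ENNReal.ofReal (∫ x, f₂ x) := by
      rw [lintegral_congr_ae hG₂ae,
        ofReal_integral_eq_lintegral_ofReal hi₂ (Filter.Eventually.of_forall hnn₂)]
    have hl₃ : ∫⁻ x, G₃ x = ENNReal.ofReal (∫ x, f₃ x) := by
      rw [lintegral_congr_ae hG₃ae,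
        ofReal_integral_eq_lintegral_ofReal hi₃ (Filter.Eventually.of_forall hnn₃)]
    have hl₄ : ∫⁻ x, G₄ x = ENNReal.ofReal (∫ x, f₄ x) := by
      rw [lintegral_congr_ae hG₄ae,
        ofReal_integral_eq_lintegral_ofReal hi₄ (Filter.Eventually.of_forall hnn₄)]
    rw [hl₁, hl₂, hl₃, hl₄, ← ENNReal.ofReal_mul (integral_nonneg hnn₁),
      ← ENNReal.ofReal_mul (integral_nonneg hnn₃)] at hcore
    exact (ENNReal.ofReal_le_ofReal_iff
      (mul_nonneg (integral_nonneg hnn₃) (integral_nonneg hnn₄))).1 hcore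
  · intro x y
    calc G₁ x * G₂ y ≤ φ₁ x * φ₂ y := mul_le_mul' (hG₁le x) (hG₂le y)
      _ = ENNReal.ofReal (f₁ x * f₂ y) := by rw [hφ₁, hφ₂, ENNReal.ofReal_mul (hnn₁ x)]
      _ ≤ ENNReal.ofReal (f₃ (lam • x + (1 - lam) • y) * f₄ ((1 - lam) • x + lam • y)) :=
          ENNReal.ofReal_le_ofReal (h x y)
      _ = φ₃ (lam • x + (1 - lam) • y) * φ₄ ((1 - lam) • x + lam • y) := by
          rw [hφ₃, hφ₄, ENNReal.ofReal_mul (hnn₃ _)]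
      _ ≤ G₃ (lam • x + (1 - lam) • y) * G₄ ((1 - lam) • x + lam • y) :=
          mul_le_mul' (hG₃ge _) (hG₄ge _)
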